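/- Let Λ = k⟨X₁,…,Xₙ⟩/(Xᵤ^a, XᵢXⱼ − qXⱼXᵢ for i<j) with q a primitive a-th root of unity, and let σ = α₁x₁ + ⋯ + αₙxₙ for scalars αᵢ. Then for each generator xᵢ one has Σ_{j=0}^{a−1} σ^j xᵢ σ^{a−1−j} = 0. -/

import Mathlib

namespace QCIAux

open Finset

variable {k : Type*} [Field k]

/-- Gaussian-binomial-style coefficients defined by a `q`-Pascal recursion. -/
def qc (q : k) : ℕ → ℕ → k
  | 0, 0 => 1
  | 0, _+1 => 0
  | _+1, 0 => 1
  | m+1, j+1 => q ^ (j+1) * qc q m (j+1) + qc q m j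

@[simp] lemma qc_zero_right (q : k) (m : ℕ) : qc q m 0 = 1 := by
  cases m <;> rfl

lemma qc_succ_succ (q : k) (m j : ℕ) :
    qc q (m+1) (j+1) = q ^ (j+1) * qc q m (j+1) + qc q m j := rfl

lemma qc_eq_zero_of_lt (q : k) : ∀ {m j : ℕ}, m < j → qc q m j = 0
  | 0, _+1, _ => rfl
  | m+1, j+1, h => by
    rw [qc_succ_succ, qc_eq_zero_of_lt q (show m < j+1 by omega),
      qc_eq_zero_of_lt q (show m < j by omega)]
    ring

@[simp] lemma qc_diag (q : k) (m : ℕ) : qc q m m = 1 := by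
  induction m with
  | zero => rfl
  | succ m ih =>
    rw [qc_succ_succ, qc_eq_zero_of_lt q (by omega), ih]
    ring

/-- The `q`-integer `[r]_q`. -/
def G (q : k) (r : ℕ) : k := ∑ j ∈ Finset.range r, q ^ j

lemma G_add (q : k) (u v : ℕ) : G q (u + v) = G q u + q ^ u * G q v := by
  unfold G
  rw [Finset.sum_range_add, Finset.mul_sum]
  simp [pow_add]

lemma qc_AB (q : k) (m : ℕ) :
    (∀ j, G q (j+1) * qc q (m+1) (j+1) = G q (m+1) * qc q m j) ∧
    (∀ j, G q (m+1-j) * qc q (m+1) j = G q (m+1) * qc q m j) := by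
  induction m with
  | zero =>
    constructor
    · intro j
      cases j with
      | zero => simp [qc_succ_succ, qc]
      | succ i =>
        rw [qc_succ_succ, qc_eq_zero_of_lt q (show 0 < i+2 by omega),
          qc_eq_zero_of_lt q (show 0 < i+1 by omega)]
        ring
    · intro j
      match j with
      | 0 => simp
      | 1 => simp [qc_eq_zero_of_lt q (show 0 < 1 by omega), G]
      | (i+2) =>
        rw [qc_eq_zero_of_lt q (show 1 < i+2 by omega),
          qc_eq_zero_of_lt q (show 0 < i+2 by omega)]
        ring
  | succ m ih =>
    obtain ⟨ihA, ihB⟩ := ih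
    have hstep : ∀ j, G q (j+1) * qc q (m+2) (j+1) = G q (m+2) * qc q (m+1) j := by
      intro j
      by_cases hj : j ≤ m + 1
      · have hsplit : G q (m+2) = G q (j+1) + q ^ (j+1) * G q (m+1-j) := by
          rw [show m + 2 = (j+1) + (m+1-j) by omega, G_add]
        rw [qc_succ_succ q (m+1) j, hsplit]
        have hA := ihA j
        have hB := ihB j
        linear_combination q ^ (j+1) * hA - q ^ (j+1) * hB
      · rw [qc_eq_zero_of_lt q (show m+1 < j by omega),
          qc_eq_zero_of_lt q (show m+2 < j+1 by omega)]
        ring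
    refine ⟨hstep, ?_⟩
    intro j
    cases j with
    | zero => simp
    | succ i =>
      by_cases hi : i ≤ m + 1
      · have hsplit : G q (m+2) = G q (i+1) + q ^ (i+1) * G q (m+1-i) := by
          rw [show m + 2 = (i+1) + (m+1-i) by omega, G_add]
        rw [show m + 2 - (i+1) = m + 1 - i by omega, qc_succ_succ q (m+1) i, hsplit]
        have hA := ihA i
        have hB := ihB i
        linear_combination hB - hA
      · rw [qc_eq_zero_of_lt q (show m+1 < i+1 by omega),
          qc_eq_zero_of_lt q (show m+2 < i+1 by omega)]
        ring

lemma qc_eq_zero_of_prim {q : k} {a : ℕ} (hq : IsPrimitiveRoot q a) (ha : 2 ≤ a)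
    {j : ℕ} (h0 : 0 < j) (hj : j < a) : qc q a j = 0 := by
  obtain ⟨i, rfl⟩ : ∃ i, j = i + 1 := ⟨j - 1, by omega⟩
  obtain ⟨m, rfl⟩ : ∃ m, a = m + 1 := ⟨a - 1, by omega⟩
  have hA := (qc_AB q m).1 i
  have hGa : G q (m+1) = 0 := hq.geom_sum_eq_zero (by omega)
  have hGj : G q (i+1) ≠ 0 := by
    have hq1 : q ≠ 1 := hq.ne_one (by omega)
    have hpow : q ^ (i+1) ≠ 1 := hq.pow_ne_one_of_pos_of_lt (by omega) (by omega)
    rw [G, geom_sum_eq hq1]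
    exact div_ne_zero (sub_ne_zero.2 hpow) (sub_ne_zero.2 hq1)
  rw [hGa, zero_mul] at hA
  exact (mul_eq_zero.1 hA).resolve_left hGj

variable {A : Type*} [Ring A] [Algebra k A]

lemma mul_pow_q {q : k} {y z : A} (h : y * z = q • (z * y)) :
    ∀ j : ℕ, y * z ^ j = q ^ j • (z ^ j * y)
  | 0 => by simp
  | j+1 => by
    rw [pow_succ' z j, ← mul_assoc, h, smul_mul_assoc, mul_assoc, mul_pow_q h j,
      mul_smul_comm, smul_smul, ← pow_succ' q j, ← mul_assoc, ← pow_succ' z j]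

theorem add_pow_qc {q : k} (y z : A) (h : y * z = q • (z * y)) (m : ℕ) :
    (y + z) ^ m = ∑ j ∈ Finset.range (m+1), qc q m j • (z ^ j * y ^ (m - j)) := by
  induction m with
  | zero => simp [qc]
  | succ m ih =>
    rw [pow_succ', ih, Finset.mul_sum]
    have e1 : ∀ j ∈ Finset.range (m+1), (y + z) * (qc q m j • (z ^ j * y ^ (m - j)))
        = (q ^ j * qc q m j) • (z ^ j * y ^ (m + 1 - j))
          + qc q m j • (z ^ (j+1) * y ^ (m - j)) := by
      intro j hj
      have hj' : j ≤ m := Nat.lt_succ_iff.mp (Finset.mem_range.mp hj)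
      rw [add_mul, mul_smul_comm, mul_smul_comm, ← mul_assoc, mul_pow_q h j,
        smul_mul_assoc, smul_smul, mul_assoc, ← pow_succ' y,
        show m - j + 1 = m + 1 - j by omega, ← mul_assoc, ← pow_succ' z,
        mul_comm (qc q m j) (q ^ j)]
    rw [Finset.sum_congr rfl e1, Finset.sum_add_distrib]
    rw [Finset.sum_range_succ' _ (m+1)]
    have e2 : ∀ j ∈ Finset.range (m+1),
        qc q (m+1) (j+1) • (z ^ (j+1) * y ^ (m + 1 - (j+1)))
        = (q ^ (j+1) * qc q m (j+1)) • (z ^ (j+1) * y ^ (m - j))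
          + qc q m j • (z ^ (j+1) * y ^ (m - j)) := by
      intro j hj
      rw [qc_succ_succ, add_smul, show m + 1 - (j+1) = m - j by omega]
    rw [Finset.sum_congr rfl e2, Finset.sum_add_distrib]
    have e3 : ∑ j ∈ Finset.range (m+1), (q ^ j * qc q m j) • (z ^ j * y ^ (m + 1 - j))
        = ∑ j ∈ Finset.range (m+1), (q ^ (j+1) * qc q m (j+1)) • (z ^ (j+1) * y ^ (m - j))
          + qc q (m+1) 0 • (z ^ 0 * y ^ (m + 1 - 0)) := by
      rw [Finset.sum_range_succ' _ m]
      congr 1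
      · rw [Finset.sum_range_succ,
          qc_eq_zero_of_lt q (show m < m + 1 by omega)]
        simp
      · simp
    rw [e3]
    abel

theorem add_pow_prim {q : k} {a : ℕ} (hq : IsPrimitiveRoot q a) (ha : 2 ≤ a)
    (y z : A) (h : y * z = q • (z * y)) : (y + z) ^ a = y ^ a + z ^ a := by
  rw [add_pow_qc y z h a]
  have hsub : ({0, a} : Finset ℕ) ⊆ Finset.range (a+1) := by
    intro t ht
    simp only [Finset.mem_insert, Finset.mem_singleton] at ht
    rcases ht with rfl | rfl <;> simp [Nat.lt_succ_iff]
  rw [← Finset.sum_subset hsub (by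
    intro x hx hx'
    simp only [Finset.mem_insert, Finset.mem_singleton, not_or] at hx'
    rw [qc_eq_zero_of_prim hq ha (by omega) (by
      have := Finset.mem_range.mp hx; omega), zero_smul])]
  rw [Finset.sum_pair (show (0:ℕ) ≠ a by omega)]
  simp

theorem sum_pow_prim {ι : Type*} [LinearOrder ι] {q : k} {a : ℕ}
    (hq : IsPrimitiveRoot q a) (ha : 2 ≤ a) (f : ι → A)
    (hf : ∀ u v, u < v → f u * f v = q • (f v * f u)) (s : Finset ι) :
    (∑ u ∈ s, f u) ^ a = ∑ u ∈ s, f u ^ a := by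
  classical
  induction s using Finset.induction_on_min with
  | empty => simp [zero_pow (show a ≠ 0 by omega)]
  | insert b s hb ih =>
    have hbs : b ∉ s := fun hmem => lt_irrefl b (hb b hmem)
    rw [Finset.sum_insert hbs, Finset.sum_insert hbs, ← ih]
    refine add_pow_prim hq ha _ _ ?_
    rw [Finset.mul_sum, Finset.sum_congr rfl (fun u hu => hf b u (hb u hu)),
      ← Finset.smul_sum, ← Finset.sum_mul]

lemma coeff_zero_pow' {R : Type*} [Ring R] (p : Polynomial R) (m : ℕ) :
    (p ^ m).coeff 0 = (p.coeff 0) ^ m := by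
  induction m with
  | zero => simp
  | succ m ih => rw [pow_succ, pow_succ, Polynomial.mul_coeff_zero, ih]

open Polynomial in
lemma coeff_one_pow {R : Type*} [Ring R] (s b : R) (m : ℕ) :
    ((C s + X * C b) ^ m).coeff 1
      = ∑ j ∈ Finset.range m, s ^ j * b * s ^ (m - 1 - j) := by
  induction m with
  | zero => simp [Polynomial.coeff_one]
  | succ m ih =>
    have h0 : (C s + X * C b).coeff 0 = s := by
      simp [Polynomial.mul_coeff_zero]
    have h1 : (C s + X * C b).coeff 1 = b := by
      simp [Polynomial.coeff_C, Polynomial.coeff_X_mul]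
    have h0m : ((C s + X * C b) ^ m).coeff 0 = s ^ m := by
      rw [coeff_zero_pow', h0]
    rw [pow_succ, Polynomial.coeff_mul, Finset.Nat.sum_antidiagonal_eq_sum_range_succ_mk,
      Finset.sum_range_succ, Finset.sum_range_one]
    simp only [Nat.sub_self, Nat.sub_zero, h0m, ih, h0, h1]
    rw [Finset.sum_range_succ, Finset.sum_mul]
    rw [Finset.sum_congr rfl (fun j hj => ?_)]
    · rw [show m + 1 - 1 - m = 0 by omega, pow_zero, mul_one]
      abel
    · have hj' : j < m := Finset.mem_range.mp hj
      rw [mul_assoc, mul_assoc, ← pow_succ, show m - 1 - j + 1 = m + 1 - 1 - j by omega,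
        ← mul_assoc]

end QCIAux

/-- The defining relations of a quantum complete intersection:
`Xᵤ^{aᵤ} = 0` and `XᵢXⱼ = q_{ij}·XⱼXᵢ` for `i < j`. -/
inductive QCIRel (k : Type*) [Field k] (n : ℕ) (a : Fin n → ℕ) (q : Fin n → Fin n → k) :
    FreeAlgebra k (Fin n) → FreeAlgebra k (Fin n) → Prop
  | pow (u : Fin n) : QCIRel k n a q (FreeAlgebra.ι k u ^ a u) 0
  | comm (i j : Fin n) (hij : i < j) : QCIRel k n a q
      (FreeAlgebra.ι k i * FreeAlgebra.ι k j)
      (q i j • (FreeAlgebra.ι k j * FreeAlgebra.ι k i))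

/-- The quantum complete intersection `k⟨X₁,…,Xₙ⟩/(Xᵤ^{aᵤ}, XᵢXⱼ − q_{ij}XⱼXᵢ)`. -/
abbrev QCI (k : Type*) [Field k] (n : ℕ) (a : Fin n → ℕ) (q : Fin n → Fin n → k) :=
  RingQuot (QCIRel k n a q)

/-- The image `xᵢ` of the generator `Xᵢ` in the quantum complete intersection. -/
def QCI.x (k : Type*) [Field k] (n : ℕ) (a : Fin n → ℕ) (q : Fin n → Fin n → k) (i : Fin n) :
    QCI k n a q :=
  RingQuot.mkAlgHom k (QCIRel k n a q) (FreeAlgebra.ι k i)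

/-- In the homogeneous quantum complete intersection with all exponents `a` and all
commutation parameters a primitive `a`-th root of unity `q`, the element
`σ = α₁x₁ + ⋯ + αₙxₙ` satisfies `Σ_{j=0}^{a−1} σ^j·xᵢ·σ^{a−1−j} = 0` for each generator `xᵢ`. -/
theorem QCI.sum_sigma_pow_x_eq_zero (k : Type*) [Field k] (n a : ℕ) (ha : 2 ≤ a) (q : k)
    (hq : IsPrimitiveRoot q a) (α : Fin n → k) (i : Fin n)
    (σ : QCI k n (fun _ => a) (fun _ _ => q))
    (hσ : σ = ∑ u, α u • QCI.x k n (fun _ => a) (fun _ _ => q) u) :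
    ∑ j ∈ Finset.range a,
      σ ^ j * QCI.x k n (fun _ => a) (fun _ _ => q) i * σ ^ (a - 1 - j) = 0 := by
  classical
  set x : Fin n → QCI k n (fun _ => a) (fun _ _ => q) :=
    QCI.x k n (fun _ => a) (fun _ _ => q) with hx
  -- basic relations in the quotient
  have hxpow : ∀ u, x u ^ a = 0 := by
    intro u
    have h := RingQuot.mkAlgHom_rel k (QCIRel.pow (k := k) (n := n) (a := fun _ => a) (q := fun _ _ => q) u)
    simpa [hx, QCI.x, map_pow] using h
  have hxcomm : ∀ u v, u < v → x u * x v = q • (x v * x u) := by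
    intro u v huv
    have h := RingQuot.mkAlgHom_rel k (QCIRel.comm (k := k) (n := n) (a := fun _ => a) (q := fun _ _ => q) u v huv)
    simpa [hx, QCI.x, map_mul, map_smul] using h
  -- work in the polynomial ring over the quotient
  set cc : Fin n → Polynomial (QCI k n (fun _ => a) (fun _ _ => q)) := fun u =>
    Polynomial.C (algebraMap k _ (α u)) + (if u = i then Polynomial.X else 0) with hcc
  set f : Fin n → Polynomial (QCI k n (fun _ => a) (fun _ _ => q)) :=
    fun u => cc u * Polynomial.C (x u) with hf
  have hcent : ∀ u (p : Polynomial (QCI k n (fun _ => a) (fun _ _ => q))),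
      Commute (cc u) p := by
    intro u p
    refine Commute.add_left ?_ ?_
    · show _ * p = p * _
      rw [← Polynomial.algebraMap_apply]
      exact Algebra.commutes _ p
    · split
      · exact Polynomial.commute_X p
      · exact Commute.zero_left p
  have hfcomm : ∀ u v, u < v → f u * f v = q • (f v * f u) := by
    intro u v huv
    show cc u * Polynomial.C (x u) * (cc v * Polynomial.C (x v))
        = q • (cc v * Polynomial.C (x v) * (cc u * Polynomial.C (x u)))
    rw [Commute.mul_mul_mul_comm ((hcent v (Polynomial.C (x u))).symm),
      Commute.mul_mul_mul_comm ((hcent u (Polynomial.C (x v))).symm),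
      ← Polynomial.C_mul, ← Polynomial.C_mul, hxcomm u v huv, ← Polynomial.smul_C,
      mul_smul_comm, (hcent u (cc v)).eq]
  have hfpow : ∀ u, f u ^ a = 0 := by
    intro u
    show (cc u * Polynomial.C (x u)) ^ a = 0
    rw [(hcent u (Polynomial.C (x u))).mul_pow, ← map_pow, hxpow u, map_zero, mul_zero]
  have hsum : ∑ u, f u = Polynomial.C σ + Polynomial.X * Polynomial.C (x i) := by
    have hterm : ∀ u, f u = Polynomial.C (α u • x u)
        + (if u = i then Polynomial.X * Polynomial.C (x u) else 0) := by
      intro u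
      show (Polynomial.C (algebraMap k _ (α u)) + _) * Polynomial.C (x u) = _
      rw [add_mul, ← Polynomial.C_mul, ← Algebra.smul_def]
      congr 1
      split <;> simp
    rw [Finset.sum_congr rfl (fun u _ => hterm u), Finset.sum_add_distrib, ← map_sum,
      Finset.sum_ite_eq' Finset.univ i, if_pos (Finset.mem_univ i), hσ]
  have key : (Polynomial.C σ + Polynomial.X * Polynomial.C (x i)) ^ a = 0 := by
    rw [← hsum, QCIAux.sum_pow_prim hq ha f hfcomm]
    simp [hfpow]
  have hco := congrArg (fun p => Polynomial.coeff p 1) key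
  simp only [QCIAux.coeff_one_pow, Polynomial.coeff_zero] at hco
  exact hco
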